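/- Let a ∈ C^∞(ℝ^{2d} \ {0}) be real-valued with lim_{(x,ξ)→(0,0)} a(x,ξ) = 0, and suppose the Hamilton flow χ_t(x,ξ) of a is well defined for all t ∈ [−T,T] (for some T > 0) and all (x,ξ) ∈ T*ℝ^d \ {0}. If σ > 0 and χ_t(Λ_σ(λ)(x,ξ)) = Λ_σ(λ) χ_t(x,ξ) holds for all λ > 0, (x,ξ) ∈ T*ℝ^d \ {0}, and t ∈ [−T,T], then a satisfies the homogeneity a(λx, λ^σ ξ) = λ^{σ+1} a(x,ξ) for all (x,ξ) ∈ T*ℝ^d \ {0} and λ > 0. -/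

import Mathlib

noncomputable section

open Real Filter MeasureTheory Set
open scoped BigOperators Topology

abbrev Rd (d : ℕ) := EuclideanSpace ℝ (Fin d)

/-- The basis direction `(e_j, 0)` in phase space. -/
def eX {d : ℕ} (j : Fin d) : Rd d × Rd d := (EuclideanSpace.single j (1:ℝ), 0)

/-- The basis direction `(0, e_j)` in phase space. -/
def eXi {d : ℕ} (j : Fin d) : Rd d × Rd d := (0, EuclideanSpace.single j (1:ℝ))

/-- Directional (partial) derivative of a phase-space function along `v`. -/
def pdir {d : ℕ} {F : Type*} [NormedAddCommGroup F] [NormedSpace ℝ F]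
    (v : Rd d × Rd d) (a : Rd d × Rd d → F) (p : Rd d × Rd d) : F :=
  fderiv ℝ a p v

/-- The anisotropic scaling `Λ_σ(λ)(x,ξ) = (λx, λ^σ ξ)`. -/
def scaleA (σ l : ℝ) {d : ℕ} (p : Rd d × Rd d) : Rd d × Rd d :=
  (l • p.1, l ^ σ • p.2)

/-- `y : ℝ → T*ℝ^d` solves Hamilton's equations for `a` on `[-T,T]` with initial
datum `p`, staying away from the origin. -/
def IsHamiltonSolution {d : ℕ} (a : Rd d × Rd d → ℝ) (T : ℝ)
    (p : Rd d × Rd d) (y : ℝ → Rd d × Rd d) : Prop :=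
  y 0 = p ∧
  ∀ t ∈ Icc (-T) T, y t ≠ 0 ∧
    ∀ j : Fin d,
      HasDerivWithinAt (fun s => (y s).1 j) (pdir (eXi j) a (y t)) (Icc (-T) T) t ∧
      HasDerivWithinAt (fun s => (y s).2 j) (-(pdir (eX j) a (y t))) (Icc (-T) T) t

lemma euclid_sum_single {d : ℕ} (v : Rd d) :
    ∑ j, v j • EuclideanSpace.single j (1:ℝ) = v := by
  have h := (EuclideanSpace.basisFun (Fin d) ℝ).sum_repr v
  simpa [EuclideanSpace.basisFun_repr, EuclideanSpace.basisFun_apply] using h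

lemma clm_ext_on_basis {d : ℕ} {A B : (Rd d × Rd d) →L[ℝ] ℝ}
    (hX : ∀ j, A (eX j) = B (eX j)) (hXi : ∀ j, A (eXi j) = B (eXi j)) : A = B := by
  apply ContinuousLinearMap.ext
  rintro ⟨v1, v2⟩
  have hv : ((v1, v2) : Rd d × Rd d) = (∑ j, v1 j • eX j) + (∑ j, v2 j • eXi j) := by
    rw [Prod.ext_iff]
    constructor
    · simp [eX, eXi, Prod.fst_sum, euclid_sum_single]
    · simp [eX, eXi, Prod.snd_sum, euclid_sum_single]
  rw [hv]
  simp [map_add, map_sum, _root_.map_smul, hX, hXi]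

theorem statement15 {d : ℕ} (σ T : ℝ) (hσ : 0 < σ) (hT : 0 < T)
    (a : Rd d × Rd d → ℝ)
    (ha : ContDiffOn ℝ (⊤ : ℕ∞) a {p : Rd d × Rd d | p ≠ 0})
    (hlim : Tendsto a (𝓝[≠] (0 : Rd d × Rd d)) (𝓝 0))
    (χ : ℝ → (Rd d × Rd d) → Rd d × Rd d)
    (hflow : ∀ p : Rd d × Rd d, p ≠ 0 → IsHamiltonSolution a T p (fun t => χ t p))
    (hcomm : ∀ l : ℝ, 0 < l → ∀ p : Rd d × Rd d, p ≠ 0 → ∀ t ∈ Icc (-T) T,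
      χ t (scaleA σ l p) = scaleA σ l (χ t p)) :
    ∀ p : Rd d × Rd d, p ≠ 0 → ∀ l : ℝ, 0 < l →
      a (scaleA σ l p) = l ^ (σ + 1) * a p := by
  have hT' : -T < T := by linarith
  have h0mem : (0:ℝ) ∈ Icc (-T) T := ⟨by linarith, hT.le⟩
  have hud : UniqueDiffWithinAt ℝ (Icc (-T) T) (0:ℝ) := uniqueDiffOn_Icc hT' 0 h0mem
  have hopen : IsOpen {p : Rd d × Rd d | p ≠ 0} := isOpen_compl_singleton
  have hdiff : ∀ q : Rd d × Rd d, q ≠ 0 → DifferentiableAt ℝ a q := fun q hq =>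
    (ha.contDiffAt (hopen.mem_nhds hq)).differentiableAt (by simp)
  have hscale_ne : ∀ (m : ℝ), 0 < m → ∀ q : Rd d × Rd d, q ≠ 0 → scaleA σ m q ≠ 0 := by
    intro m hm q hq h
    apply hq
    have h1 : m • q.1 = 0 := congrArg Prod.fst h
    have h2 : m ^ σ • q.2 = 0 := congrArg Prod.snd h
    rw [smul_eq_zero] at h1 h2
    rw [Prod.ext_iff]
    exact ⟨h1.resolve_left hm.ne', h2.resolve_left (Real.rpow_pos_of_pos hm σ).ne'⟩
  intro p hp l hl
  have hlσ : 0 < l ^ σ := Real.rpow_pos_of_pos hl σ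
  have hpow : l ^ (σ + 1) = l * l ^ σ := by
    rw [Real.rpow_add hl, Real.rpow_one, mul_comm]
  -- step A: scaling of partial derivatives
  have keyXi : ∀ q : Rd d × Rd d, q ≠ 0 → ∀ j : Fin d,
      pdir (eXi j) a (scaleA σ l q) = l * pdir (eXi j) a q := by
    intro q hq j
    have hq' := hscale_ne l hl q hq
    obtain ⟨hq0, hqd⟩ := hflow (scaleA σ l q) hq'
    obtain ⟨hp0, hpd⟩ := hflow q hq
    have hd1 : HasDerivWithinAt (fun s => (χ s (scaleA σ l q)).1 j)
        (pdir (eXi j) a (scaleA σ l q)) (Icc (-T) T) 0 := by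
      have h := ((hqd 0 h0mem).2 j).1
      rw [hq0] at h
      exact h
    have hd2 : HasDerivWithinAt (fun s => (χ s q).1 j)
        (pdir (eXi j) a q) (Icc (-T) T) 0 := by
      have h := ((hpd 0 h0mem).2 j).1
      rw [hp0] at h
      exact h
    have hd4 : HasDerivWithinAt (fun s => (χ s (scaleA σ l q)).1 j)
        (l * pdir (eXi j) a q) (Icc (-T) T) 0 := by
      apply (hd2.const_mul l).congr
      · intro t ht
        rw [hcomm l hl q hq t ht]
        simp [scaleA]
      · rw [hcomm l hl q hq 0 h0mem]
        simp [scaleA]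
    rw [← hd1.derivWithin hud, hd4.derivWithin hud]
  have keyX : ∀ q : Rd d × Rd d, q ≠ 0 → ∀ j : Fin d,
      pdir (eX j) a (scaleA σ l q) = l ^ σ * pdir (eX j) a q := by
    intro q hq j
    have hq' := hscale_ne l hl q hq
    obtain ⟨hq0, hqd⟩ := hflow (scaleA σ l q) hq'
    obtain ⟨hp0, hpd⟩ := hflow q hq
    have hd1 : HasDerivWithinAt (fun s => (χ s (scaleA σ l q)).2 j)
        (-(pdir (eX j) a (scaleA σ l q))) (Icc (-T) T) 0 := by
      have h := ((hqd 0 h0mem).2 j).2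
      rw [hq0] at h
      exact h
    have hd2 : HasDerivWithinAt (fun s => (χ s q).2 j)
        (-(pdir (eX j) a q)) (Icc (-T) T) 0 := by
      have h := ((hpd 0 h0mem).2 j).2
      rw [hp0] at h
      exact h
    have hd4 : HasDerivWithinAt (fun s => (χ s (scaleA σ l q)).2 j)
        (l ^ σ * -(pdir (eX j) a q)) (Icc (-T) T) 0 := by
      apply (hd2.const_mul (l ^ σ)).congr
      · intro t ht
        rw [hcomm l hl q hq t ht]
        simp [scaleA]
      · rw [hcomm l hl q hq 0 h0mem]
        simp [scaleA]
    have h5 : -(pdir (eX j) a (scaleA σ l q)) = l ^ σ * -(pdir (eX j) a q) := by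
      rw [← hd1.derivWithin hud, hd4.derivWithin hud]
    rw [mul_neg] at h5
    exact neg_inj.mp h5
  -- the scaling as a continuous linear map
  set L : (Rd d × Rd d) →L[ℝ] (Rd d × Rd d) :=
    (l • ContinuousLinearMap.id ℝ (Rd d)).prodMap
      ((l ^ σ) • ContinuousLinearMap.id ℝ (Rd d)) with hLdef
  have hLapp : ∀ q : Rd d × Rd d, L q = scaleA σ l q := by
    intro q
    rfl
  set gl : (Rd d × Rd d) → ℝ := fun q => a (scaleA σ l q) - l ^ (σ + 1) * a q with hgl
  have hg0 : ∀ x : Rd d × Rd d, x ≠ 0 →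
      HasFDerivAt gl (0 : (Rd d × Rd d) →L[ℝ] ℝ) x := by
    intro x hx
    have hLx : scaleA σ l x ≠ 0 := hscale_ne l hl x hx
    have hF : HasFDerivAt a (fderiv ℝ a (scaleA σ l x)) (scaleA σ l x) :=
      (hdiff _ hLx).hasFDerivAt
    have hLd : HasFDerivAt (fun q : Rd d × Rd d => scaleA σ l q) L x := by
      have h := L.hasFDerivAt (x := x)
      have : (fun q : Rd d × Rd d => scaleA σ l q) = fun q => L q := by
        funext q; exact (hLapp q).symm
      rw [this]
      exact h
    have hcompL : HasFDerivAt (fun q => a (scaleA σ l q))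
        ((fderiv ℝ a (scaleA σ l x)).comp L) x := by
      exact hF.comp x hLd
    have hsm : HasFDerivAt (fun q => l ^ (σ + 1) * a q)
        (l ^ (σ + 1) • fderiv ℝ a x) x := ((hdiff x hx).hasFDerivAt).const_mul _
    have hD : HasFDerivAt gl
        ((fderiv ℝ a (scaleA σ l x)).comp L - l ^ (σ + 1) • fderiv ℝ a x) x :=
      hcompL.sub hsm
    have hzero : (fderiv ℝ a (scaleA σ l x)).comp L
        = l ^ (σ + 1) • fderiv ℝ a x := by
      apply clm_ext_on_basis
      · intro j
        have hLe : L (eX j) = l • eX j := by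
          rw [hLapp]
          simp [scaleA, eX, Prod.ext_iff]
        rw [ContinuousLinearMap.comp_apply, hLe, ContinuousLinearMap.map_smul]
        have hk : fderiv ℝ a (scaleA σ l x) (eX j) = l ^ σ * fderiv ℝ a x (eX j) :=
          keyX x hx j
        rw [hk]
        simp [hpow, smul_eq_mul]
        ring
      · intro j
        have hLe : L (eXi j) = (l ^ σ) • eXi j := by
          rw [hLapp]
          simp [scaleA, eXi, Prod.ext_iff]
        rw [ContinuousLinearMap.comp_apply, hLe, ContinuousLinearMap.map_smul]
        have hk : fderiv ℝ a (scaleA σ l x) (eXi j) = l * fderiv ℝ a x (eXi j) :=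
          keyXi x hx j
        rw [hk]
        simp [hpow, smul_eq_mul]
        ring
    rw [hzero, sub_self] at hD
    exact hD
  -- gl is constant along rays
  have hray : ∀ ε : ℝ, 0 < ε → ε ≤ 1 → gl (ε • p) = gl p := by
    intro ε hε hε1
    have hseg : ∀ x ∈ segment ℝ (ε • p) p, x ≠ (0 : Rd d × Rd d) := by
      rintro x ⟨u, v, hu, hv, huv, rfl⟩
      have heq : u • ε • p + v • p = (u * ε + v) • p := by
        rw [smul_smul, add_smul]
      rw [heq]
      have hpos : 0 < u * ε + v := by
        nlinarith [mul_nonneg hu hε.le]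
      exact smul_ne_zero hpos.ne' hp
    have hle := Convex.norm_image_sub_le_of_norm_hasFDerivWithin_le
      (C := 0) (f' := fun _ : Rd d × Rd d => (0 : (Rd d × Rd d) →L[ℝ] ℝ))
      (fun x hx => (hg0 x (hseg x hx)).hasFDerivWithinAt)
      (fun x _ => by simp) (convex_segment _ _)
      (left_mem_segment ℝ (ε • p) p) (right_mem_segment ℝ (ε • p) p)
    have h2 : ‖gl p - gl (ε • p)‖ ≤ 0 := by simpa using hle
    have h3 := norm_le_zero_iff.mp h2
    linarith [sub_eq_zero.mp h3]
  -- limit along the ray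
  have hq' : (scaleA σ l p : Rd d × Rd d) ≠ 0 := hscale_ne l hl p hp
  have htends : ∀ q : Rd d × Rd d, q ≠ 0 →
      Tendsto (fun ε : ℝ => ε • q) (𝓝[>] (0:ℝ)) (𝓝[≠] (0 : Rd d × Rd d)) := by
    intro q hq
    rw [tendsto_nhdsWithin_iff]
    constructor
    · have h1 : Tendsto (fun ε : ℝ => ε • q) (𝓝 (0:ℝ)) (𝓝 ((0:ℝ) • q)) :=
        (continuous_id.smul continuous_const).tendsto 0
      have h2 : Tendsto (fun ε : ℝ => ε • q) (𝓝[>] (0:ℝ)) (𝓝 ((0:ℝ) • q)) :=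
        h1.mono_left nhdsWithin_le_nhds
      simpa using h2
    · filter_upwards [self_mem_nhdsWithin] with ε hε
      exact smul_ne_zero (ne_of_gt hε) hq
  have hscale_smul : ∀ ε : ℝ, scaleA σ l (ε • p) = ε • scaleA σ l p := by
    intro ε
    simp only [scaleA, Prod.smul_fst, Prod.smul_snd, Prod.smul_mk]
    rw [smul_comm, smul_comm (l ^ σ)]
  have htend : Tendsto (fun ε : ℝ => gl (ε • p)) (𝓝[>] (0:ℝ)) (𝓝 0) := by
    have h1 : Tendsto (fun ε : ℝ => a (scaleA σ l (ε • p))) (𝓝[>] (0:ℝ)) (𝓝 0) := by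
      have := hlim.comp (htends _ hq')
      apply this.congr
      intro ε
      simp [hscale_smul ε, Function.comp]
    have h2 : Tendsto (fun ε : ℝ => l ^ (σ + 1) * a (ε • p)) (𝓝[>] (0:ℝ)) (𝓝 (l ^ (σ + 1) * 0)) :=
      (hlim.comp (htends _ hp)).const_mul _
    have h3 := h1.sub h2
    simpa [hgl] using h3
  have heqv : ∀ᶠ ε in 𝓝[>] (0:ℝ), gl (ε • p) = gl p := by
    have hIoc : Ioc (0:ℝ) 1 ∈ 𝓝[>] (0:ℝ) :=
      Ioc_mem_nhdsGT_of_mem ⟨le_refl 0, one_pos⟩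
    filter_upwards [hIoc] with ε hε
    exact hray ε hε.1 hε.2
  have hconst : Tendsto (fun _ : ℝ => gl p) (𝓝[>] (0:ℝ)) (𝓝 0) :=
    htend.congr' heqv
  have hglp : gl p = 0 := tendsto_nhds_unique tendsto_const_nhds hconst
  have : a (scaleA σ l p) - l ^ (σ + 1) * a p = 0 := hglp
  linarith
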